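/- Let V₀ be an arbitrary smooth real-valued function on (0,∞) and d₉ a real constant. Let H = −(ħ²/2)Δ + V₀(r) + (d₉ − V₀(r))K + (1/2)(σ₁,p)(σ₂,p) and Y₃₀ = (1/2)(σ₁+σ₂, p). Then the quadratic operator identity (Y₃₀)² = (1/4)(H − d₉)(K + 3) holds, where d₉ denotes d₉ times the identity operator. -/

import Mathlib

noncomputable section

open scoped BigOperators

/-- The spinor space `ℂ⁴ = ℂ² ⊗ ℂ²`, realized as functions on `Fin 2 × Fin 2`. -/
abbrev Spinor : Type := Fin 2 × Fin 2 → ℂ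

/-- Wave functions on `ℝ³` (in the statements they are restricted to functions
that are smooth away from the origin). -/
abbrev WaveFn : Type := (Fin 3 → ℝ) → Spinor

/-- Operators: `ℂ`-linear combinations and compositions are formed pointwise. -/
abbrev Op : Type := WaveFn → WaveFn

/-- The commutator `[A,B] = AB − BA`. -/
def opComm (A B : Op) : Op := fun ψ => A (B ψ) - B (A ψ)

/-- The identity operator. -/
def idOp : Op := fun ψ => ψ

/-- The Euclidean norm `r = |x|`. -/
def rfun (x : Fin 3 → ℝ) : ℝ := Real.sqrt (∑ k, x k ^ 2)

/-- Multiplication by a radial function `f(r)`. -/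
def mulR (f : ℝ → ℝ) : Op := fun ψ x => (f (rfun x) : ℂ) • ψ x

/-- The position operator `x_k` (multiplication by the k-th coordinate). -/
def xOp (k : Fin 3) : Op := fun ψ x => (x k : ℂ) • ψ x

/-- The momentum operator `p_k = -ihbar ∂/∂x_k`. -/
def pOp (hbar : ℝ) (k : Fin 3) : Op :=
  fun ψ x => (-(Complex.I * (hbar : ℂ))) • fderiv ℝ ψ x (Pi.single k 1)

/-- The Laplacian `Δ = Σ_k ∂²/∂x_k²`. -/
def lap : Op :=
  fun ψ x => ∑ k, fderiv ℝ (fun y => fderiv ℝ ψ y (Pi.single k 1)) x (Pi.single k 1)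

/-- The totally antisymmetric Levi-Civita symbol `ε_{ijk}` on `Fin 3`. -/
def eps (i j k : Fin 3) : ℂ :=
  ((j.1 : ℂ) - (i.1 : ℂ)) * ((k.1 : ℂ) - (i.1 : ℂ)) * ((k.1 : ℂ) - (j.1 : ℂ)) / 2

/-- The standard Pauli matrices `σ¹, σ², σ³`. -/
def pauli : Fin 3 → Matrix (Fin 2) (Fin 2) ℂ :=
  ![!![0, 1; 1, 0], !![0, -Complex.I; Complex.I, 0], !![1, 0; 0, -1]]

/-- `(σ₁)_k = σ^k ⊗ I₂`, acting on the first tensor factor. -/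
def sigma1 (k : Fin 3) : Op := fun ψ x ab => ∑ j, pauli k ab.1 j * ψ x (j, ab.2)

/-- `(σ₂)_k = I₂ ⊗ σ^k`, acting on the second tensor factor. -/
def sigma2 (k : Fin 3) : Op := fun ψ x ab => ∑ j, pauli k ab.2 j * ψ x (ab.1, j)

/-- Dot product of triples of operators: `(A,B) = Σ_k A_k B_k`. -/
def dot (A B : Fin 3 → Op) : Op := ∑ k, A k ∘ B k

/-- Cross product of triples of operators: `(A×B)_k = ε_{klm} A_l B_m`. -/
def cross (A B : Fin 3 → Op) (k : Fin 3) : Op := ∑ l, ∑ m, eps k l m • (A l ∘ B m)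

/-- The angular momentum `L_k = ε_{klm} x_l p_m`. -/
def LOp (hbar : ℝ) (k : Fin 3) : Op := ∑ l, ∑ m, eps k l m • (xOp l ∘ pOp hbar m)

/-- The spin-exchange operator `K = (σ₁,σ₂)`. -/
def KOp : Op := dot sigma1 sigma2

/-- `σ₁ + σ₂` componentwise. -/
def sigmaSum (k : Fin 3) : Op := sigma1 k + sigma2 k

/-- `σ₁ − σ₂` componentwise. -/
def sigmaDiff (k : Fin 3) : Op := sigma1 k - sigma2 k

/-- The general rotationally invariant two-spin Hamiltonian
`H = −(hbar²/2)Δ + V₀(r) + ½V₁(r)(σ₁+σ₂,L) + V₂(r)K + V₃(r)(x,σ₁)(x,σ₂)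
    + V₄(r)(σ₁,p)(σ₂,p) + ½V₅(r)[(σ₁,L)(σ₂,L)+(σ₂,L)(σ₁,L)]`. -/
def Ham (hbar : ℝ) (V₀ V₁ V₂ V₃ V₄ V₅ : ℝ → ℝ) : Op :=
  (-(hbar ^ 2 / 2) : ℂ) • lap + mulR V₀
    + ((1 : ℂ)/2) • (mulR V₁ ∘ dot sigmaSum (LOp hbar))
    + mulR V₂ ∘ KOp
    + mulR V₃ ∘ (dot xOp sigma1 ∘ dot xOp sigma2)
    + mulR V₄ ∘ (dot sigma1 (pOp hbar) ∘ dot sigma2 (pOp hbar))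
    + ((1 : ℂ)/2) • (mulR V₅ ∘ (dot sigma1 (LOp hbar) ∘ dot sigma2 (LOp hbar)
        + dot sigma2 (LOp hbar) ∘ dot sigma1 (LOp hbar)))



namespace S8

set_option maxHeartbeats 1000000

/-- A `(ℂ⁴)`-matrix, as a continuous `ℝ`-linear map on `Spinor`. -/
def matCLM (T : (Fin 2 × Fin 2) → (Fin 2 × Fin 2) → ℂ) : Spinor →L[ℝ] Spinor :=
  LinearMap.toContinuousLinearMap
  { toFun := fun v s => ∑ t, T s t * v t
    map_add' := by intro v w; funext s; simp [mul_add, Finset.sum_add_distrib]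
    map_smul' := by
      intro c v; funext s
      simp [Finset.mul_sum]
      exact Finset.sum_congr rfl fun t _ => by ring }

lemma matCLM_apply (T : (Fin 2 × Fin 2) → (Fin 2 × Fin 2) → ℂ) (v : Spinor)
    (s : Fin 2 × Fin 2) : matCLM T v s = ∑ t, T s t * v t := rfl

def T1 (k : Fin 3) (s t : Fin 2 × Fin 2) : ℂ := if t.2 = s.2 then pauli k s.1 t.1 else 0
def T2 (k : Fin 3) (s t : Fin 2 × Fin 2) : ℂ := if t.1 = s.1 then pauli k s.2 t.2 else 0

def B : Spinor →L[ℝ] Spinor :=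
  (∑ k : Fin 3, (matCLM (T1 k)).comp (matCLM (T2 k))) + (3:ℂ) • ContinuousLinearMap.id ℝ Spinor

@[simp] lemma M1_0_0 (v : Spinor) (b : Fin 2) : matCLM (T1 0) v (0, b) = v (1, b) := by
  simp [matCLM_apply, T1, pauli, Fintype.sum_prod_type, Fin.sum_univ_two]
@[simp] lemma M1_0_1 (v : Spinor) (b : Fin 2) : matCLM (T1 0) v (1, b) = v (0, b) := by
  simp [matCLM_apply, T1, pauli, Fintype.sum_prod_type, Fin.sum_univ_two]
@[simp] lemma M1_1_0 (v : Spinor) (b : Fin 2) :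
    matCLM (T1 1) v (0, b) = -(Complex.I * v (1, b)) := by
  simp [matCLM_apply, T1, pauli, Fintype.sum_prod_type, Fin.sum_univ_two]
@[simp] lemma M1_1_1 (v : Spinor) (b : Fin 2) :
    matCLM (T1 1) v (1, b) = Complex.I * v (0, b) := by
  simp [matCLM_apply, T1, pauli, Fintype.sum_prod_type, Fin.sum_univ_two]
@[simp] lemma M1_2_0 (v : Spinor) (b : Fin 2) : matCLM (T1 2) v (0, b) = v (0, b) := by
  simp [matCLM_apply, T1, pauli, Fintype.sum_prod_type, Fin.sum_univ_two]
@[simp] lemma M1_2_1 (v : Spinor) (b : Fin 2) : matCLM (T1 2) v (1, b) = -v (1, b) := by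
  simp [matCLM_apply, T1, pauli, Fintype.sum_prod_type, Fin.sum_univ_two]
@[simp] lemma M2_0_0 (v : Spinor) (a : Fin 2) : matCLM (T2 0) v (a, 0) = v (a, 1) := by
  simp [matCLM_apply, T2, pauli, Fintype.sum_prod_type, Fin.sum_univ_two]
@[simp] lemma M2_0_1 (v : Spinor) (a : Fin 2) : matCLM (T2 0) v (a, 1) = v (a, 0) := by
  simp [matCLM_apply, T2, pauli, Fintype.sum_prod_type, Fin.sum_univ_two]
@[simp] lemma M2_1_0 (v : Spinor) (a : Fin 2) :
    matCLM (T2 1) v (a, 0) = -(Complex.I * v (a, 1)) := by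
  simp [matCLM_apply, T2, pauli, Fintype.sum_prod_type, Fin.sum_univ_two]
@[simp] lemma M2_1_1 (v : Spinor) (a : Fin 2) :
    matCLM (T2 1) v (a, 1) = Complex.I * v (a, 0) := by
  simp [matCLM_apply, T2, pauli, Fintype.sum_prod_type, Fin.sum_univ_two]
@[simp] lemma M2_2_0 (v : Spinor) (a : Fin 2) : matCLM (T2 2) v (a, 0) = v (a, 0) := by
  simp [matCLM_apply, T2, pauli, Fintype.sum_prod_type, Fin.sum_univ_two]
@[simp] lemma M2_2_1 (v : Spinor) (a : Fin 2) : matCLM (T2 2) v (a, 1) = -v (a, 1) := by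
  simp [matCLM_apply, T2, pauli, Fintype.sum_prod_type, Fin.sum_univ_two]

@[simp] lemma B_apply (v : Spinor) (a b : Fin 2) :
    B v (a, b) = 2 * v (b, a) + 2 * v (a, b) := by
  fin_cases a <;> fin_cases b <;>
  simp [B, Fin.sum_univ_three, ContinuousLinearMap.add_apply, ContinuousLinearMap.coe_sum',
      Finset.sum_apply, ContinuousLinearMap.comp_apply, ContinuousLinearMap.smul_apply,
      ContinuousLinearMap.id_apply, Pi.add_apply, Pi.smul_apply, smul_eq_mul,
      -Prod.mk_zero_zero, -Prod.mk_one_one] <;>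
  ring_nf <;>
  simp [Complex.I_sq] <;>
  try ring

/-- The central algebraic identity. -/
lemma keyalg (c V0c d9c : ℂ) (g : Fin 3 → Fin 3 → Spinor) (v : Spinor)
    (h01 : g 1 0 = g 0 1) (h02 : g 2 0 = g 0 2) (h12 : g 2 1 = g 1 2) :
    ((1:ℂ)/2) • ∑ k : Fin 3,
        (matCLM (T1 k) (c • (((1:ℂ)/2) • ∑ l : Fin 3,
            (matCLM (T1 l) (c • g k l) + matCLM (T2 l) (c • g k l))))
        + matCLM (T2 k) (c • (((1:ℂ)/2) • ∑ l : Fin 3,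
            (matCLM (T1 l) (c • g k l) + matCLM (T2 l) (c • g k l))))) =
    ((1:ℂ)/4) • ((c * c / 2) • ∑ k : Fin 3, B (g k k)
      + V0c • B v
      + (d9c - V0c) • ∑ k : Fin 3, matCLM (T1 k) (matCLM (T2 k) (B v))
      + ((1:ℂ)/2) • ∑ k : Fin 3, matCLM (T1 k) (c • ∑ l : Fin 3, matCLM (T2 l) (c • B (g k l)))
      - d9c • B v) := by
  funext s
  obtain ⟨a, b⟩ := s
  fin_cases a <;> fin_cases b <;>
  simp [Fin.sum_univ_three, Finset.sum_apply, Pi.add_apply, Pi.smul_apply, Pi.sub_apply,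
      smul_eq_mul, h01, h02, h12, -Prod.mk_zero_zero, -Prod.mk_one_one] <;>
  ring_nf <;>
  simp [Complex.I_sq] <;>
  try ring

lemma sigma1_eq (k : Fin 3) (φ : WaveFn) (y : Fin 3 → ℝ) :
    sigma1 k φ y = matCLM (T1 k) (φ y) := by
  funext s
  simp [sigma1, T1, matCLM_apply, Fintype.sum_prod_type, ite_mul]

lemma sigma2_eq (k : Fin 3) (φ : WaveFn) (y : Fin 3 → ℝ) :
    sigma2 k φ y = matCLM (T2 k) (φ y) := by
  funext s
  simp [sigma2, T2, matCLM_apply, Fintype.sum_prod_type, ite_mul]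

lemma fderiv_matCLM (A : Spinor →L[ℝ] Spinor) {φ : WaveFn} {y : Fin 3 → ℝ}
    (h : DifferentiableAt ℝ φ y) :
    fderiv ℝ (fun z => A (φ z)) y = A.comp (fderiv ℝ φ y) :=
  (A.hasFDerivAt.comp y h.hasFDerivAt).fderiv

lemma diff_matCLM (A : Spinor →L[ℝ] Spinor) {φ : WaveFn} {y : Fin 3 → ℝ}
    (h : DifferentiableAt ℝ φ y) :
    DifferentiableAt ℝ (fun z => A (φ z)) y :=
  A.differentiableAt.comp y h

end S8

open S8

/-- with `H = −(ħ²/2)Δ + V₀(r) + (d₉ − V₀(r))K + ½(σ₁,p)(σ₂,p)` and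
`Y₃₀ = ½(σ₁+σ₂,p)`, the identity `(Y₃₀)² = ¼(H − d₉)(K + 3)` holds. -/
theorem statement8 (hbar : ℝ) (hhbar : hbar ≠ 0) (V₀ : ℝ → ℝ) (d₉ : ℝ)
    (hV₀ : ContDiffOn ℝ (⊤ : ℕ∞) V₀ (Set.Ioi (0 : ℝ)))
    (ψ : WaveFn) (hψ : ContDiffOn ℝ (⊤ : ℕ∞) ψ {x : Fin 3 → ℝ | x ≠ 0})
    (x : Fin 3 → ℝ) (hx : x ≠ 0) :
    ((((1 : ℂ)/2) • dot sigmaSum (pOp hbar)) ∘ (((1 : ℂ)/2) • dot sigmaSum (pOp hbar))) ψ x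
      =
    (((1 : ℂ)/4) •
      ((Ham hbar V₀ (fun _ => 0) (fun r => d₉ - V₀ r) (fun _ => 0)
          (fun _ => 1 / 2) (fun _ => 0) - (d₉ : ℂ) • idOp)
        ∘ (KOp + (3 : ℂ) • idOp))) ψ x := by
  classical
  have hU : IsOpen {y : Fin 3 → ℝ | y ≠ 0} := isOpen_compl_singleton
  have hψx : ContDiffAt ℝ ((⊤:ℕ∞)) ψ x := hψ.contDiffAt (hU.mem_nhds hx)
  have hF : DifferentiableAt ℝ (fderiv ℝ ψ) x := by
    have h2 : ContDiffAt ℝ 1 (fderiv ℝ ψ) x :=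
      hψx.fderiv_right (by decide)
    exact h2.differentiableAt one_ne_zero
  have hdiff : ∀ᶠ y in nhds x, DifferentiableAt ℝ ψ y := by
    filter_upwards [hU.mem_nhds hx] with y hy
    exact (hψ.contDiffAt (hU.mem_nhds hy)).differentiableAt (by simp)
  set c : ℂ := -(Complex.I * (hbar:ℂ)) with cdef
  set g : Fin 3 → Fin 3 → Spinor :=
    fun k l => fderiv ℝ (fderiv ℝ ψ) x (Pi.single k 1) (Pi.single l 1) with gdef
  have hDl : ∀ l : Fin 3, DifferentiableAt ℝ (fun y => fderiv ℝ ψ y (Pi.single l 1)) x :=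
    fun l => hF.clm_apply (differentiableAt_const _)
  have hDlf : ∀ k l : Fin 3,
      fderiv ℝ (fun y => fderiv ℝ ψ y (Pi.single l 1)) x (Pi.single k 1) = g k l := by
    intro k l
    rw [fderiv_clm_apply hF (differentiableAt_const _)]
    simp [gdef]
  have hsym : ∀ k l : Fin 3, g k l = g l k := by
    intro k l
    simp only [gdef]
    exact (hψx.isSymmSndFDerivAt (by simp [minSmoothness_of_isRCLikeNormedField]; exact WithTop.coe_le_coe.2 (le_top : (2:ℕ∞) ≤ ⊤))) _ _
  -- formula for the operator `½(σ₁+σ₂,p)`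
  have houter : ∀ (φ : WaveFn) (y : Fin 3 → ℝ),
      (((1:ℂ)/2) • dot sigmaSum (pOp hbar)) φ y
        = ((1:ℂ)/2) • ∑ k : Fin 3,
            (matCLM (T1 k) (c • fderiv ℝ φ y (Pi.single k 1))
              + matCLM (T2 k) (c • fderiv ℝ φ y (Pi.single k 1))) := by
    intro φ y
    simp only [Pi.smul_apply, dot, sigmaSum, Finset.sum_apply, Function.comp_apply,
      Pi.add_apply, sigma1_eq, sigma2_eq, pOp, ← cdef]
  set Y1 : WaveFn := fun y => ((1:ℂ)/2) • ∑ l : Fin 3,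
      (matCLM (T1 l) (c • fderiv ℝ ψ y (Pi.single l 1))
        + matCLM (T2 l) (c • fderiv ℝ ψ y (Pi.single l 1))) with Y1def
  have hY1 : (((1:ℂ)/2) • dot sigmaSum (pOp hbar)) ψ = Y1 := by
    funext y; rw [houter ψ y]
  have hcd : ∀ l : Fin 3,
      DifferentiableAt ℝ (fun y => c • fderiv ℝ ψ y (Pi.single l 1)) x :=
    fun l => (hDl l).const_smul c
  have hMd : ∀ (T : (Fin 2 × Fin 2) → (Fin 2 × Fin 2) → ℂ) (k l : Fin 3),
      fderiv ℝ (fun y => matCLM T (c • fderiv ℝ ψ y (Pi.single l 1))) x (Pi.single k 1)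
        = matCLM T (c • g k l) := by
    intro T k l
    rw [fderiv_matCLM (matCLM T) (hcd l), ContinuousLinearMap.comp_apply,
      fderiv_fun_const_smul (hDl l) c, ContinuousLinearMap.smul_apply, hDlf k l]
  have htd : ∀ l : Fin 3, DifferentiableAt ℝ
      (fun y => matCLM (T1 l) (c • fderiv ℝ ψ y (Pi.single l 1))
        + matCLM (T2 l) (c • fderiv ℝ ψ y (Pi.single l 1))) x :=
    fun l => (diff_matCLM _ (hcd l)).add (diff_matCLM _ (hcd l))
  have hYd : ∀ k : Fin 3, fderiv ℝ Y1 x (Pi.single k 1)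
      = ((1:ℂ)/2) • ∑ l : Fin 3,
          (matCLM (T1 l) (c • g k l) + matCLM (T2 l) (c • g k l)) := by
    intro k
    rw [Y1def, fderiv_fun_const_smul (DifferentiableAt.fun_sum fun l _ => htd l) ((1:ℂ)/2),
      fderiv_fun_sum (fun l _ => htd l), ContinuousLinearMap.smul_apply,
      ContinuousLinearMap.sum_apply]
    refine congrArg _ (Finset.sum_congr rfl fun l _ => ?_)
    rw [fderiv_fun_add (diff_matCLM _ (hcd l)) (diff_matCLM _ (hcd l)),
      ContinuousLinearMap.add_apply, hMd, hMd]
  have hLHS : ((((1:ℂ)/2) • dot sigmaSum (pOp hbar)) ∘ (((1:ℂ)/2) • dot sigmaSum (pOp hbar))) ψ x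
      = ((1:ℂ)/2) • ∑ k : Fin 3,
          (matCLM (T1 k) (c • (((1:ℂ)/2) • ∑ l : Fin 3,
              (matCLM (T1 l) (c • g k l) + matCLM (T2 l) (c • g k l))))
          + matCLM (T2 k) (c • (((1:ℂ)/2) • ∑ l : Fin 3,
              (matCLM (T1 l) (c • g k l) + matCLM (T2 l) (c • g k l))))) := by
    rw [Function.comp_apply, hY1, houter Y1 x]
    exact congrArg _ (Finset.sum_congr rfl fun k _ => by rw [hYd k])
  -- the function `φf = (K+3)ψ`
  set φf : WaveFn := fun y => B (ψ y) with φfdef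
  have hKv : ∀ (φ : WaveFn) (y : Fin 3 → ℝ),
      KOp φ y = ∑ k : Fin 3, matCLM (T1 k) (matCLM (T2 k) (φ y)) := by
    intro φ y
    simp only [KOp, dot, Finset.sum_apply, Function.comp_apply, sigma1_eq, sigma2_eq]
  have hφ : (KOp + (3:ℂ) • idOp) ψ = φf := by
    funext y
    simp only [Pi.add_apply, Pi.smul_apply, idOp, hKv, φfdef, B,
      ContinuousLinearMap.add_apply, ContinuousLinearMap.coe_sum', Finset.sum_apply,
      ContinuousLinearMap.comp_apply, ContinuousLinearMap.smul_apply,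
      ContinuousLinearMap.id_apply]
  have hfdφ : ∀ l : Fin 3, (fun y => fderiv ℝ φf y (Pi.single l 1))
      =ᶠ[nhds x] (fun y => B (fderiv ℝ ψ y (Pi.single l 1))) := by
    intro l
    filter_upwards [hdiff] with y hy
    rw [φfdef, fderiv_matCLM B hy, ContinuousLinearMap.comp_apply]
  have hsecond : ∀ k l : Fin 3,
      fderiv ℝ (fun y => fderiv ℝ φf y (Pi.single l 1)) x (Pi.single k 1) = B (g k l) := by
    intro k l
    rw [(hfdφ l).fderiv_eq, fderiv_matCLM B (hDl l), ContinuousLinearMap.comp_apply, hDlf k l]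
  have hlap : lap φf x = ∑ k : Fin 3, B (g k k) := by
    simp only [lap]
    exact Finset.sum_congr rfl fun k _ => hsecond k k
  have hdot1 : ∀ (χ : WaveFn) (y : Fin 3 → ℝ), dot sigma1 (pOp hbar) χ y
      = ∑ k : Fin 3, matCLM (T1 k) (c • fderiv ℝ χ y (Pi.single k 1)) := by
    intro χ y
    simp only [dot, Finset.sum_apply, Function.comp_apply, sigma1_eq, pOp, ← cdef]
  have hchiev : dot sigma2 (pOp hbar) φf =ᶠ[nhds x]
      (fun y => ∑ l : Fin 3, matCLM (T2 l) (c • B (fderiv ℝ ψ y (Pi.single l 1)))) := by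
    filter_upwards [hdiff] with y hy
    simp only [dot, Finset.sum_apply, Function.comp_apply, sigma2_eq, pOp, ← cdef]
    refine Finset.sum_congr rfl fun l _ => ?_
    rw [φfdef, fderiv_matCLM B hy, ContinuousLinearMap.comp_apply]
  have hchid : ∀ k : Fin 3, fderiv ℝ (dot sigma2 (pOp hbar) φf) x (Pi.single k 1)
      = ∑ l : Fin 3, matCLM (T2 l) (c • B (g k l)) := by
    intro k
    rw [hchiev.fderiv_eq,
      fderiv_fun_sum (fun l _ => diff_matCLM _ (φ := fun y => c • B (fderiv ℝ ψ y (Pi.single l 1)))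
        ((diff_matCLM B (hDl l)).const_smul c)),
      ContinuousLinearMap.sum_apply]
    refine Finset.sum_congr rfl fun l _ => ?_
    rw [fderiv_matCLM _ (φ := fun y => c • B (fderiv ℝ ψ y (Pi.single l 1)))
        ((diff_matCLM B (hDl l)).const_smul c), ContinuousLinearMap.comp_apply,
      fderiv_fun_const_smul (diff_matCLM B (hDl l)) c, ContinuousLinearMap.smul_apply,
      fderiv_matCLM B (hDl l), ContinuousLinearMap.comp_apply, hDlf k l]
  have ht6 : dot sigma1 (pOp hbar) (dot sigma2 (pOp hbar) φf) x
      = ∑ k : Fin 3, matCLM (T1 k) (c • ∑ l : Fin 3, matCLM (T2 l) (c • B (g k l))) := by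
    rw [hdot1]
    exact Finset.sum_congr rfl fun k _ => by rw [hchid k]
  have hcc2 : (-((hbar:ℂ) ^ 2 / 2)) = c * c / 2 := by
    rw [cdef]
    rw [show -(Complex.I * (hbar:ℂ)) * -(Complex.I * (hbar:ℂ))
        = Complex.I * Complex.I * ((hbar:ℂ) * (hbar:ℂ)) from by ring, Complex.I_mul_I]
    ring
  have hRHSval : (((1:ℂ)/4) •
      ((Ham hbar V₀ (fun _ => 0) (fun r => d₉ - V₀ r) (fun _ => 0)
          (fun _ => 1 / 2) (fun _ => 0) - (d₉ : ℂ) • idOp)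
        ∘ (KOp + (3 : ℂ) • idOp))) ψ x
      = ((1:ℂ)/4) • ((c * c / 2) • ∑ k : Fin 3, B (g k k)
        + ((V₀ (rfun x) : ℝ) : ℂ) • B (ψ x)
        + (((d₉:ℂ) - ((V₀ (rfun x) : ℝ) : ℂ)) • ∑ k : Fin 3, matCLM (T1 k) (matCLM (T2 k) (B (ψ x))))
        + ((1:ℂ)/2) • ∑ k : Fin 3, matCLM (T1 k) (c • ∑ l : Fin 3, matCLM (T2 l) (c • B (g k l)))
        - (d₉:ℂ) • B (ψ x)) := by
    have e0 : (((1:ℂ)/4) •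
        ((Ham hbar V₀ (fun _ => 0) (fun r => d₉ - V₀ r) (fun _ => 0)
            (fun _ => 1 / 2) (fun _ => 0) - (d₉ : ℂ) • idOp)
          ∘ (KOp + (3 : ℂ) • idOp))) ψ x
        = ((1:ℂ)/4) • ((-((hbar:ℂ) ^ 2 / 2)) • lap ((KOp + (3 : ℂ) • idOp) ψ) x
          + ((V₀ (rfun x) : ℝ) : ℂ) • ((KOp + (3 : ℂ) • idOp) ψ) x
          + ((1:ℂ)/2) • (((0:ℝ) : ℂ) • dot sigmaSum (LOp hbar) ((KOp + (3 : ℂ) • idOp) ψ) x)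
          + ((d₉ - V₀ (rfun x) : ℝ) : ℂ) • KOp ((KOp + (3 : ℂ) • idOp) ψ) x
          + ((0:ℝ) : ℂ) • dot xOp sigma1 (dot xOp sigma2 ((KOp + (3 : ℂ) • idOp) ψ)) x
          + ((1/2 : ℝ) : ℂ) • dot sigma1 (pOp hbar)
              (dot sigma2 (pOp hbar) ((KOp + (3 : ℂ) • idOp) ψ)) x
          + ((1:ℂ)/2) • (((0:ℝ) : ℂ) •
              (dot sigma1 (LOp hbar) (dot sigma2 (LOp hbar) ((KOp + (3 : ℂ) • idOp) ψ))
                + dot sigma2 (LOp hbar) (dot sigma1 (LOp hbar) ((KOp + (3 : ℂ) • idOp) ψ))) x)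
          - (d₉ : ℂ) • ((KOp + (3 : ℂ) • idOp) ψ) x) := rfl
    rw [e0, hφ, hlap, hKv, ht6, hcc2]
    simp only [φfdef, Complex.ofReal_zero, zero_smul, smul_zero, add_zero, zero_add,
      Complex.ofReal_sub, Complex.ofReal_div, Complex.ofReal_one, Complex.ofReal_ofNat]
  rw [hLHS, hRHSval]
  exact keyalg c _ _ g (ψ x) (hsym 1 0) (hsym 2 0) (hsym 2 1)
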